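/- For every i ∈ {1, …, m+n−1} with i ≠ m and every c ∈ M_{▵_i}, the tableau 𝙿_i(c) equals the subtableau of κ(c) consisting of all boxes whose entries are greater than or equal to i+2. -/

import Mathlib

/-- `a` is one of the letters of `𝕀 = {1, …, m+n}`; the letter `a` is even iff `a ≤ m`. -/
def IsLetter (m n a : ℕ) : Prop := 1 ≤ a ∧ a ≤ m + n

/-- A column, read from top to bottom: entries weakly increase, and even letters
(`a ≤ m`) appear at most once. -/
def ColOK (m : ℕ) (C : List ℕ) : Prop :=
  C.Chain' fun a b => a ≤ b ∧ (a = b → m < a)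

/-- The entry of a column at height `h` from the bottom (`0` if out of range). -/
def ebot (C : List ℕ) (h : ℕ) : ℕ := C.reverse.getD h 0

/-- Compatibility between a column `C` and the column `D` directly to its left
(columns are bottom-justified): `D` is not longer than `C`, rows weakly increase from
left to right, and odd letters (`> m`) appear at most once in each row. -/
def AdjOK (m : ℕ) (C D : List ℕ) : Prop :=
  D.length ≤ C.length ∧
    ∀ h < D.length, ebot D h ≤ ebot C h ∧ (ebot D h = ebot C h → ebot D h ≤ m)

/-- `T` is an `𝕀`-semistandard tableau of rotated partition shape `δ^π`; the columns of `T`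
are listed from the rightmost (the longest) to the leftmost, each read from top to bottom. -/
def SSTrot (m n : ℕ) (T : List (List ℕ)) : Prop :=
  (∀ C ∈ T, C ≠ [] ∧ ColOK m C ∧ ∀ a ∈ C, IsLetter m n a) ∧ List.Chain' (AdjOK m) T

/-- The shape of `T` is an `(m|n)`-hook partition: at most `n` columns have length `> m`. -/
def Hook (m n : ℕ) (T : List (List ℕ)) : Prop := ∀ C ∈ T.drop n, C.length ≤ m

/-- `T ∈ V^{d_{m|n}}`: an `𝕀`-semistandard tableau of shape `δ^π` for an `(m|n)`-hook
partition `δ` all of whose column lengths are even. -/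
def Vd (m n : ℕ) (T : List (List ℕ)) : Prop :=
  SSTrot m n T ∧ Hook m n T ∧ ∀ C ∈ T, Even C.length

/-- The position (index from the top) of the entry bumped out when `a` is inserted into the
column `C` by reverse column insertion: the bottommost entry `≤ a` if `a` is even,
resp. `< a` if `a` is odd; `none` if no entry is bumped. -/
def bumpIdx (m a : ℕ) (C : List ℕ) : Option ℕ :=
  (List.range C.length).reverse.find? fun t =>
    if a ≤ m then decide (C.getD t 0 ≤ a) else decide (C.getD t 0 < a)

/-- Reverse Schensted column insertion of `a`, starting from the rightmost column:
returns the new tableau together with the index of the column where a new box was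
created (on top of that column). -/
def insertAux (m : ℕ) : ℕ → List (List ℕ) → List (List ℕ) × ℕ
  | a, [] => ([[a]], 0)
  | a, C :: rest =>
    match bumpIdx m a C with
    | none => ((a :: C) :: rest, 0)
    | some t =>
      let r := insertAux m (C.getD t 0) rest
      (C.set t a :: r.1, r.2 + 1)

/-- `T ← a`, reverse Schensted column insertion. -/
def colIns (m : ℕ) (T : List (List ℕ)) (a : ℕ) : List (List ℕ) := (insertAux m a T).1

/-- `T ←B (i,j)`: Burge insertion, obtained from `T ← j` by adding a box filled with `i`
directly above the unique new box of `T ← j`. -/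
def burgeIns (m : ℕ) (T : List (List ℕ)) (p : ℕ × ℕ) : List (List ℕ) :=
  let r := insertAux m p.2 T
  r.1.set r.2 (p.1 :: r.1.getD r.2 [])

/-- All biletters `(i,j)` with `1 ≤ i ≤ j ≤ m+n`, listed in increasing order with respect
to the order `<'`: `(i,j) <' (k,l)` iff `i < k`, or `i = k ≤ m` and `j > l`, or
`i = k > m` and `j < l`. -/
def biletters (m n : ℕ) : List (ℕ × ℕ) :=
  ((List.range' 1 (m + n)).map fun i =>
    if i ≤ m then ((List.range' i (m + n + 1 - i)).map fun j => (i, j)).reverse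
    else (List.range' i (m + n + 1 - i)).map fun j => (i, j)).flatten

/-- The biword of `c`: each biletter `(i,j)` occurs exactly `c (i,j)` times, in increasing
order with respect to `<'`. -/
def biword (m n : ℕ) (c : ℕ × ℕ → ℕ) : List (ℕ × ℕ) :=
  ((biletters m n).map fun p => List.replicate (c p) p).flatten

/-- The Burge correspondence: `κ(c) = ((D ←B (i_{r−1},j_{r−1})) ←B ⋯ ←B (i_1,j_1))`,
the iterated Burge insertion of the biword of `c` (starting from the empty tableau;
note that inserting the last biletter into the empty tableau produces exactly the
vertical domino with `i_r` above `j_r`). -/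
def kappa (m n : ℕ) (c : ℕ × ℕ → ℕ) : List (List ℕ) :=
  (biword m n c).foldr (fun p T => burgeIns m T p) []

/-- `c ∈ M^{d_{m|n}}`: an array `(c_{ij})_{1 ≤ i ≤ j ≤ m+n}` with `c_{ij} ∈ {0,1}` when
`i, j` have different parities and `c_{ii} = 0` for even `i`. -/
def Md (m n : ℕ) (c : ℕ × ℕ → ℕ) : Prop :=
  (∀ p : ℕ × ℕ, c p ≠ 0 → 1 ≤ p.1 ∧ p.1 ≤ p.2 ∧ p.2 ≤ m + n) ∧
  (∀ i j : ℕ, i ≤ m → m < j → c (i, j) ≤ 1) ∧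
  ∀ i : ℕ, i ≤ m → c (i, i) = 0

open scoped Classical

/-- Membership in `▵_i = {(k,l) : i ≤ k ≤ l ≤ m+n}`. -/
def BTset (m n i : ℕ) (p : ℕ × ℕ) : Prop := i ≤ p.1 ∧ p.1 ≤ p.2 ∧ p.2 ≤ m + n

/-- Membership in `△_i`. -/
def TriSet (m i : ℕ) (p : ℕ × ℕ) : Prop :=
  if i < m then p = (i, i + 1)
  else if i = m then p = (i, i + 1) ∨ p = (i + 1, i + 1)
  else p = (i, i) ∨ p = (i, i + 1) ∨ p = (i + 1, i + 1)

/-- Membership in `◊_i = ▵_i ∖ (△_i ∪ ▵_{i+2})`. -/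
def DiaSet (m n i : ℕ) (p : ℕ × ℕ) : Prop :=
  BTset m n i p ∧ ¬ TriSet m i p ∧ ¬ BTset m n (i + 2) p

/-- The restriction `c_X` of `c` to a set `X` of positions (zero elsewhere). -/
noncomputable def cRes (S : ℕ × ℕ → Prop) (c : ℕ × ℕ → ℕ) : ℕ × ℕ → ℕ :=
  fun p => if S p then c p else 0

/-- `𝙿(T, c') = ((T ← b_s) ← ⋯ ← b_1)`, where `(a_1⋯a_s, b_1⋯b_s)` is the biword of `c'`. -/
def PtabOf (m n : ℕ) (T : List (List ℕ)) (c : ℕ × ℕ → ℕ) : List (List ℕ) :=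
  (biword m n c).foldr (fun p S => colIns m S p.2) T

/-- `𝙿_i(c) = 𝙿(κ(c_{▵_{i+2}}), c_{◊_i})`. -/
noncomputable def PtabI (m n i : ℕ) (c : ℕ × ℕ → ℕ) : List (List ℕ) :=
  PtabOf m n (kappa m n (cRes (BTset m n (i + 2)) c)) (cRes (DiaSet m n i) c)

/-- The subtableau of `T` consisting of all boxes with entries `≥ v`. -/
def geSub (v : ℕ) (T : List (List ℕ)) : List (List ℕ) :=
  (T.map fun C => C.filter fun a => decide (v ≤ a)).filter fun C => !C.isEmpty


section Statement5Aux

/-- The bump predicate: `a` bumps entry `x`. -/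
def hits (m a x : ℕ) : Bool := if a ≤ m then decide (x ≤ a) else decide (x < a)

lemma hits_le {m a x : ℕ} (h : hits m a x = true) : x ≤ a := by
  unfold hits at h; split at h <;> simp at h <;> omega

lemma le_of_hits_false {m a x : ℕ} (h : hits m a x = false) : a ≤ x := by
  unfold hits at h; split at h <;> simp at h <;> omega

lemma hits_of_lt {m a x : ℕ} (h : x < a) : hits m a x = true := by
  unfold hits; split <;> simp <;> omega

lemma frr_none {P : ℕ → Bool} {N : ℕ} :
    (List.range N).reverse.find? P = none ↔ ∀ t < N, P t = false := by
  rw [List.find?_eq_none]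
  constructor
  · intro h t ht
    simpa using h t (by simpa using ht)
  · intro h t ht
    have := h t (by simpa using ht)
    simp [this]

lemma frr_some {P : ℕ → Bool} : ∀ {N t : ℕ},
    (List.range N).reverse.find? P = some t ↔
      t < N ∧ P t = true ∧ ∀ s, t < s → s < N → P s = false := by
  intro N
  induction N with
  | zero => intro t; simp
  | succ N ih =>
    intro t
    rw [List.range_succ, List.reverse_append]
    simp only [List.reverse_singleton, List.singleton_append]
    by_cases hN : P N = true
    · rw [List.find?_cons_of_pos hN]
      constructor
      · rintro h
        injection h with h; subst h
        exact ⟨Nat.lt_succ_self _, hN, fun s hs hs' => by omega⟩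
      · rintro ⟨ht, hPt, hmax⟩
        have : t = N := by
          by_contra hne
          have := hmax N (by omega) (by omega)
          rw [hN] at this; exact absurd this (by simp)
        subst this; rfl
    · rw [List.find?_cons_of_neg hN]
      rw [ih]
      constructor
      · rintro ⟨ht, hPt, hmax⟩
        refine ⟨by omega, hPt, fun s hs hs' => ?_⟩
        rcases Nat.lt_succ_iff_lt_or_eq.mp hs' with h | h
        · exact hmax s hs h
        · subst h; exact Bool.eq_false_iff.mpr hN
      · rintro ⟨ht, hPt, hmax⟩
        have htN : t ≠ N := fun h => hN (h ▸ hPt)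
        exact ⟨by omega, hPt, fun s hs hs' => hmax s hs (by omega)⟩

lemma bumpIdx_def (m a : ℕ) (C : List ℕ) :
    bumpIdx m a C = (List.range C.length).reverse.find? (fun t => hits m a (C.getD t 0)) := rfl

lemma bumpIdx_none {m a : ℕ} {C : List ℕ} :
    bumpIdx m a C = none ↔ ∀ t < C.length, hits m a (C.getD t 0) = false := by
  rw [bumpIdx_def, frr_none]

lemma bumpIdx_some {m a : ℕ} {C : List ℕ} {t : ℕ} :
    bumpIdx m a C = some t ↔
      t < C.length ∧ hits m a (C.getD t 0) = true ∧
        ∀ s, t < s → s < C.length → hits m a (C.getD s 0) = false := by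
  rw [bumpIdx_def, frr_some]

lemma getD_mem {l : List ℕ} {s : ℕ} (h : s < l.length) : l.getD s 0 ∈ l := by
  rw [List.getD_eq_getElem _ _ h]; exact List.getElem_mem h


/-- The part of a column consisting of entries `≥ v`. -/
def vGE (v : ℕ) (C : List ℕ) : List ℕ := C.filter (fun a => decide (v ≤ a))

lemma geSub_eq (v : ℕ) (T : List (List ℕ)) :
    geSub v T = (T.map (vGE v)).filter (fun C => !C.isEmpty) := rfl

lemma geSub_nil (v : ℕ) : geSub v [] = [] := rfl

lemma geSub_cons (v : ℕ) (C : List ℕ) (T : List (List ℕ)) :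
    geSub v (C :: T) = if vGE v C = [] then geSub v T else vGE v C :: geSub v T := by
  rw [geSub_eq, List.map_cons, List.filter_cons]
  by_cases h : vGE v C = [] <;> simp [h, geSub_eq]

lemma vGE_cons_pos {v a : ℕ} (C : List ℕ) (h : v ≤ a) : vGE v (a :: C) = a :: vGE v C := by
  simp [vGE, List.filter_cons, h]

lemma vGE_cons_neg {v a : ℕ} (C : List ℕ) (h : ¬ v ≤ a) : vGE v (a :: C) = vGE v C := by
  simp [vGE, List.filter_cons, h]

lemma vGE_eq_nil {v : ℕ} {C : List ℕ} (h : ∀ x ∈ C, x < v) : vGE v C = [] := by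
  rw [vGE, List.filter_eq_nil_iff]
  intro x hx; simpa using Nat.not_le.mpr (h x hx)

lemma vGE_eq_self {v : ℕ} {C : List ℕ} (h : ∀ x ∈ C, v ≤ x) : vGE v C = C := by
  rw [vGE, List.filter_eq_self]
  intro x hx; simpa using h x hx

lemma vGE_append (v : ℕ) (A B : List ℕ) : vGE v (A ++ B) = vGE v A ++ vGE v B :=
  List.filter_append _ _

lemma exists_mem_of_vGE_ne_nil {v : ℕ} {C : List ℕ} (h : vGE v C ≠ []) :
    ∃ x ∈ C, v ≤ x := by
  rcases List.exists_mem_of_ne_nil _ h with ⟨x, hx⟩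
  rw [vGE, List.mem_filter] at hx
  exact ⟨x, hx.1, by simpa using hx.2⟩

lemma vGE_ne_nil_of {v : ℕ} {C : List ℕ} {x : ℕ} (hx : x ∈ C) (hvx : v ≤ x) :
    vGE v C ≠ [] := by
  intro h
  rw [vGE, List.filter_eq_nil_iff] at h
  exact h x hx (by simpa using hvx)

/-- Decomposition of a sorted column into the part `< v` and the part `≥ v`. -/
lemma sorted_decomp {v : ℕ} {C : List ℕ} (hC : C.Pairwise (· ≤ ·)) :
    ∃ A B, C = A ++ B ∧ (∀ x ∈ A, x < v) ∧ (∀ x ∈ B, v ≤ x) ∧ vGE v C = B := by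
  refine ⟨C.takeWhile (fun x => decide (x < v)), C.dropWhile (fun x => decide (x < v)),
    List.takeWhile_append_dropWhile.symm, ?_, ?_, ?_⟩
  · intro x hx
    simpa using List.mem_takeWhile_imp hx
  · intro x hx
    set B := C.dropWhile (fun x => decide (x < v)) with hB
    have hBsub : B.Sublist C := List.dropWhile_sublist _
    have hBpw : B.Pairwise (· ≤ ·) := hC.sublist hBsub
    rcases hBeq : B with _ | ⟨h0, tl⟩
    · rw [hBeq] at hx; simp at hx
    · have hhead : v ≤ h0 := by
        have := List.head?_dropWhile_not (fun x => decide (x < v)) C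
        rw [← hB, hBeq] at this
        simp only [List.head?_cons] at this
        simpa using this
      rw [hBeq] at hx hBpw
      rcases List.mem_cons.mp hx with rfl | hx'
      · exact hhead
      · exact le_trans hhead ((List.pairwise_cons.mp hBpw).1 x hx')
  · conv_lhs => rw [← List.takeWhile_append_dropWhile (p := fun x => decide (x < v)) (l := C)]
    rw [vGE_append, vGE_eq_nil, vGE_eq_self]
    · simp
    · intro x hx
      set B := C.dropWhile (fun x => decide (x < v)) with hB
      have hBsub : B.Sublist C := List.dropWhile_sublist _
      have hBpw : B.Pairwise (· ≤ ·) := hC.sublist hBsub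
      rcases hBeq : B with _ | ⟨h0, tl⟩
      · rw [hBeq] at hx; simp at hx
      · have hhead : v ≤ h0 := by
          have := List.head?_dropWhile_not (fun x => decide (x < v)) C
          rw [← hB, hBeq] at this
          simp only [List.head?_cons] at this
          simpa using this
        rw [hBeq] at hx hBpw
        rcases List.mem_cons.mp hx with rfl | hx'
        · exact hhead
        · exact le_trans hhead ((List.pairwise_cons.mp hBpw).1 x hx')
    · intro x hx
      simpa using List.mem_takeWhile_imp hx

/-- Setting the bumped position keeps a column sorted. -/
lemma sorted_set {m a : ℕ} {C : List ℕ} {t : ℕ} (hC : C.Pairwise (· ≤ ·))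
    (ht : t < C.length) (h1 : hits m a (C.getD t 0) = true)
    (h2 : ∀ s, t < s → s < C.length → hits m a (C.getD s 0) = false) :
    (C.set t a).Pairwise (· ≤ ·) := by
  rw [List.pairwise_iff_getElem] at hC ⊢
  intro p q hp hq hpq
  simp only [List.length_set] at hp hq
  rw [List.getElem_set, List.getElem_set]
  have hCt : C.getD t 0 = C[t] := List.getD_eq_getElem _ _ ht
  by_cases hpt : t = p
  · subst hpt
    simp only [if_pos rfl, if_neg (by omega : ¬ t = q)]
    have := h2 q (by omega) hq
    rw [List.getD_eq_getElem _ _ hq] at this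
    exact le_of_hits_false this
  · rw [if_neg hpt]
    by_cases hqt : t = q
    · subst hqt
      rw [if_pos rfl]
      have h3 : C[p] ≤ C[t] := hC p t hp ht (by omega)
      have h4 : C[t] ≤ a := by rw [← hCt]; exact hits_le h1
      omega
    · rw [if_neg hqt]
      exact hC p q hp hq hpq

lemma mem_set_self {a : ℕ} {C : List ℕ} {t : ℕ} (ht : t < C.length) : a ∈ C.set t a := by
  refine List.mem_iff_getElem.mpr ⟨t, by simpa using ht, ?_⟩
  rw [List.getElem_set]; simp

lemma exists_mem_set {v a : ℕ} {C : List ℕ} {t : ℕ} (ht : t < C.length)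
    (hba : C.getD t 0 ≤ a) (h : ∃ x ∈ C, v ≤ x) : ∃ x ∈ C.set t a, v ≤ x := by
  obtain ⟨x, hx, hvx⟩ := h
  rw [List.mem_iff_getElem] at hx
  obtain ⟨s, hs, rfl⟩ := hx
  by_cases hst : t = s
  · subst hst
    refine ⟨a, mem_set_self ht, ?_⟩
    rw [List.getD_eq_getElem _ _ ht] at hba
    omega
  · refine ⟨C[s], ?_, hvx⟩
    refine List.mem_iff_getElem.mpr ⟨s, by simpa using hs, ?_⟩
    rw [List.getElem_set, if_neg hst]


lemma insertAux_nil (m a : ℕ) : insertAux m a [] = ([[a]], 0) := rfl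

lemma insertAux_cons_none {m a : ℕ} {C : List ℕ} (rest : List (List ℕ))
    (h : bumpIdx m a C = none) : insertAux m a (C :: rest) = ((a :: C) :: rest, 0) := by
  rw [insertAux, h]

lemma insertAux_cons_some {m a : ℕ} {C : List ℕ} {t : ℕ} (rest : List (List ℕ))
    (h : bumpIdx m a C = some t) :
    insertAux m a (C :: rest) =
      (C.set t a :: (insertAux m (C.getD t 0) rest).1,
        (insertAux m (C.getD t 0) rest).2 + 1) := by
  rw [insertAux, h]

/-- Insertion preserves sortedness of the columns. -/
lemma ins_sorted (m : ℕ) : ∀ (T : List (List ℕ)) (a : ℕ),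
    (∀ C ∈ T, C.Pairwise (· ≤ ·)) →
    ∀ C ∈ (insertAux m a T).1, C.Pairwise (· ≤ ·) := by
  intro T
  induction T with
  | nil =>
    intro a _ C hC
    rw [insertAux_nil] at hC
    simp at hC; simp [hC]
  | cons C0 rest ih =>
    intro a hT C hC
    rcases h : bumpIdx m a C0 with _ | t
    · rw [insertAux_cons_none rest h] at hC
      rcases List.mem_cons.mp hC with rfl | hC'
      · rw [List.pairwise_cons]
        refine ⟨fun x hx => ?_, hT C0 (by simp)⟩
        have hnone := bumpIdx_none.mp h
        rw [List.mem_iff_getElem] at hx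
        obtain ⟨s, hs, rfl⟩ := hx
        have := hnone s hs
        rw [List.getD_eq_getElem _ _ hs] at this
        exact le_of_hits_false this
      · exact hT C (List.mem_cons_of_mem _ hC')
    · rw [insertAux_cons_some rest h] at hC
      obtain ⟨ht, h1, h2⟩ := bumpIdx_some.mp h
      rcases List.mem_cons.mp hC with rfl | hC'
      · exact sorted_set (hT C0 (by simp)) ht h1 h2
      · exact ih _ (fun D hD => hT D (List.mem_cons_of_mem _ hD)) C hC'

/-- Insertion keeps all columns nonempty. -/
lemma ins_ne_nil (m : ℕ) : ∀ (T : List (List ℕ)) (a : ℕ),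
    (∀ C ∈ T, C ≠ []) → ∀ C ∈ (insertAux m a T).1, C ≠ [] := by
  intro T
  induction T with
  | nil =>
    intro a _ C hC
    rw [insertAux_nil] at hC
    simp at hC; simp [hC]
  | cons C0 rest ih =>
    intro a hT C hC
    rcases h : bumpIdx m a C0 with _ | t
    · rw [insertAux_cons_none rest h] at hC
      rcases List.mem_cons.mp hC with rfl | hC'
      · simp
      · exact hT C (List.mem_cons_of_mem _ hC')
    · rw [insertAux_cons_some rest h] at hC
      obtain ⟨ht, -, -⟩ := bumpIdx_some.mp h
      rcases List.mem_cons.mp hC with rfl | hC'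
      · intro hnil
        have : (C0.set t a).length = 0 := by rw [hnil]; rfl
        rw [List.length_set] at this; omega
      · exact ih _ (fun D hD => hT D (List.mem_cons_of_mem _ hD)) C hC'

/-- Entries after insertion are the new letter or old entries. -/
lemma ins_mem (m : ℕ) : ∀ (T : List (List ℕ)) (a : ℕ),
    ∀ C ∈ (insertAux m a T).1, ∀ x ∈ C, x = a ∨ ∃ D ∈ T, x ∈ D := by
  intro T
  induction T with
  | nil =>
    intro a C hC x hx
    rw [insertAux_nil] at hC
    simp at hC; subst hC; simp at hx; exact Or.inl hx
  | cons C0 rest ih =>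
    intro a C hC x hx
    rcases h : bumpIdx m a C0 with _ | t
    · rw [insertAux_cons_none rest h] at hC
      rcases List.mem_cons.mp hC with rfl | hC'
      · rcases List.mem_cons.mp hx with rfl | hx'
        · exact Or.inl rfl
        · exact Or.inr ⟨C0, by simp, hx'⟩
      · exact Or.inr ⟨C, List.mem_cons_of_mem _ hC', hx⟩
    · rw [insertAux_cons_some rest h] at hC
      obtain ⟨ht, -, -⟩ := bumpIdx_some.mp h
      rcases List.mem_cons.mp hC with rfl | hC'
      · rcases List.mem_or_eq_of_mem_set hx with hx' | rfl
        · exact Or.inr ⟨C0, by simp, hx'⟩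
        · exact Or.inl rfl
      · rcases ih (C0.getD t 0) C hC' x hx with rfl | ⟨D, hD, hxD⟩
        · exact Or.inr ⟨C0, by simp, getD_mem ht⟩
        · exact Or.inr ⟨D, List.mem_cons_of_mem _ hD, hxD⟩

/-- The index of the new box is a valid column index. -/
lemma ins_r_lt (m : ℕ) : ∀ (T : List (List ℕ)) (a : ℕ),
    (insertAux m a T).2 < (insertAux m a T).1.length := by
  intro T
  induction T with
  | nil => intro a; rw [insertAux_nil]; simp
  | cons C0 rest ih =>
    intro a
    rcases h : bumpIdx m a C0 with _ | t
    · rw [insertAux_cons_none rest h]; simp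
    · rw [insertAux_cons_some rest h]
      have := ih (C0.getD t 0)
      simpa using Nat.succ_lt_succ this

/-- The order relation on adjacent columns tracking nonemptiness of the `≥ v` part. -/
def Qrel (v : ℕ) (C D : List ℕ) : Prop := (∃ x ∈ D, v ≤ x) → ∃ x ∈ C, v ≤ x

lemma chainQ_of_all {v : ℕ} : ∀ {T : List (List ℕ)},
    (∀ C ∈ T, ∃ x ∈ C, v ≤ x) → List.Chain' (Qrel v) T := by
  intro T
  induction T with
  | nil => intro _; exact List.isChain_nil
  | cons C rest ih =>
    intro h
    refine List.isChain_cons.mpr ?_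
    exact ⟨fun D _ _ => h C (by simp), ih fun D hD => h D (List.mem_cons_of_mem _ hD)⟩

lemma geSub_nil_of_chain {v : ℕ} : ∀ {T : List (List ℕ)} {C : List ℕ},
    List.Chain' (Qrel v) (C :: T) → vGE v C = [] → geSub v (C :: T) = [] := by
  intro T
  induction T with
  | nil => intro C _ hC; rw [geSub_cons, if_pos hC, geSub_nil]
  | cons D rest ih =>
    intro C hch hC
    replace hch := List.isChain_cons_cons.mp hch
    have hD : vGE v D = [] := by
      by_contra hne
      obtain ⟨x, hx, hvx⟩ := exists_mem_of_vGE_ne_nil hne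
      obtain ⟨y, hy, hvy⟩ := hch.1 ⟨x, hx, hvx⟩
      exact vGE_ne_nil_of hy hvy hC
    rw [geSub_cons, if_pos hC]
    exact ih hch.2 hD

/-- Insertion preserves the chain condition `Qrel`, and the head of the result can only
contain an entry `≥ v` if the old head did or the inserted letter is `≥ v`. -/
lemma ins_Q (m v : ℕ) : ∀ (T : List (List ℕ)) (a : ℕ),
    List.Chain' (Qrel v) T →
    List.Chain' (Qrel v) (insertAux m a T).1 ∧
      ((∃ y ∈ (insertAux m a T).1.headD [], v ≤ y) →
        (∃ y ∈ T.headD [], v ≤ y) ∨ v ≤ a) := by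
  intro T
  induction T with
  | nil =>
    intro a _
    rw [insertAux_nil]
    constructor
    · exact List.isChain_singleton _
    · rintro ⟨y, hy, hvy⟩
      simp at hy; subst hy; exact Or.inr hvy
  | cons C0 rest ih =>
    intro a hch
    replace hch := List.isChain_cons.mp hch
    rcases h : bumpIdx m a C0 with _ | t
    · rw [insertAux_cons_none rest h]
      constructor
      · refine List.isChain_cons.mpr ?_
        refine ⟨fun D hD hex => ?_, hch.2⟩
        obtain ⟨x, hx, hvx⟩ := hch.1 D hD hex
        exact ⟨x, List.mem_cons_of_mem _ hx, hvx⟩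
      · rintro ⟨y, hy, hvy⟩
        simp only [List.headD_cons] at hy ⊢
        rcases List.mem_cons.mp hy with rfl | hy'
        · exact Or.inr hvy
        · exact Or.inl ⟨y, hy', hvy⟩
    · rw [insertAux_cons_some rest h]
      obtain ⟨ht, h1, h2⟩ := bumpIdx_some.mp h
      set b := C0.getD t 0 with hb
      have hba : b ≤ a := hits_le h1
      obtain ⟨ihQ, ihH⟩ := ih b hch.2
      constructor
      · refine List.isChain_cons.mpr ?_
        refine ⟨fun D hD hex => ?_, ihQ⟩
        have hD' : D = (insertAux m b rest).1.headD [] := by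
          rcases hR : (insertAux m b rest).1 with _ | ⟨E, R'⟩
          · rw [hR] at hD; simp at hD
          · rw [hR] at hD
            simp only [List.head?_cons, Option.mem_def, Option.some.injEq] at hD
            simp [hR, hD]
        rcases ihH (hD' ▸ hex) with hex' | hvb
        · -- some entry ≥ v in head of rest
          rcases hrest : rest with _ | ⟨E, R'⟩
          · rw [hrest] at hex'; simp at hex'
          · rw [hrest] at hex'
            simp only [List.headD_cons] at hex'
            have := hch.1 E (by rw [hrest]; simp) hex'
            exact exists_mem_set ht hba this
        · -- v ≤ b
          refine ⟨a, mem_set_self ht, by omega⟩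
      · rintro ⟨y, hy, hvy⟩
        simp only [List.headD_cons] at hy ⊢
        rcases List.mem_or_eq_of_mem_set hy with hy' | rfl
        · exact Or.inl ⟨y, hy', hvy⟩
        · exact Or.inr hvy


lemma vGE_set_low {v a : ℕ} {C : List ℕ} {t : ℕ} (ht : t < C.length)
    (hold : C.getD t 0 < v) (hnew : a < v) : vGE v (C.set t a) = vGE v C := by
  rw [List.getD_eq_getElem _ _ ht] at hold
  have hdrop : C.drop t = C[t] :: C.drop (t + 1) := List.drop_eq_getElem_cons ht
  conv_rhs => rw [← List.take_append_drop t C, hdrop]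
  rw [List.set_eq_take_append_cons_drop, if_pos ht]
  rw [vGE_append, vGE_append, vGE_cons_neg _ (by omega), vGE_cons_neg _ (by omega)]

/-- The key commutation: `geSub v` of an insertion. -/
lemma ins_geSub (m v : ℕ) : ∀ (T : List (List ℕ)) (a : ℕ),
    (∀ C ∈ T, C.Pairwise (· ≤ ·)) → List.Chain' (Qrel v) T →
    geSub v (insertAux m a T).1 =
      if v ≤ a then (insertAux m a (geSub v T)).1 else geSub v T := by
  intro T
  induction T with
  | nil =>
    intro a _ _
    rw [insertAux_nil, geSub_nil, insertAux_nil]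
    by_cases hva : v ≤ a
    · rw [if_pos hva]
      have h1 : vGE v [a] = [a] := vGE_eq_self (by simpa using hva)
      rw [geSub_cons, if_neg (by simp [h1]), h1, geSub_nil]
    · rw [if_neg hva]
      have h1 : vGE v [a] = [] := vGE_eq_nil (by simp; omega)
      rw [geSub_cons, if_pos h1, geSub_nil]
  | cons C0 rest ih =>
    intro a hsort hch
    have hC0 := hsort C0 (by simp)
    obtain ⟨A, B, hAB, hA, hB, hvge⟩ := sorted_decomp (v := v) hC0
    have hsrest : ∀ C ∈ rest, C.Pairwise (· ≤ ·) :=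
      fun C hC => hsort C (List.mem_cons_of_mem _ hC)
    have hqrest : List.Chain' (Qrel v) rest := (List.isChain_cons.mp hch).2
    by_cases hva : v ≤ a
    · rw [if_pos hva]
      rcases hbB : bumpIdx m a B with _ | t'
      · -- no bump in the `≥ v` part
        have hbnoneB := bumpIdx_none.mp hbB
        by_cases hAnil : A = []
        · -- C0 = B, overall no bump
          have hC0B : C0 = B := by rw [hAB, hAnil, List.nil_append]
          have hnone : bumpIdx m a C0 = none := by rw [hC0B]; exact hbB
          rw [insertAux_cons_none rest hnone]
          have hvgeNew : vGE v (a :: C0) = a :: B := by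
            rw [vGE_cons_pos _ hva, hvge]
          rw [geSub_cons, if_neg (by simp [hvgeNew]), hvgeNew]
          by_cases hBnil : B = []
          · have h1 : geSub v (C0 :: rest) = [] :=
              geSub_nil_of_chain hch (by rw [hvge, hBnil])
            have h2 : geSub v rest = [] := by
              rw [geSub_cons, if_pos (by rw [hvge, hBnil])] at h1; exact h1
            rw [h1, h2, insertAux_nil, hBnil]
          · rw [geSub_cons, if_neg (by rw [hvge]; exact hBnil), hvge,
              insertAux_cons_none _ hbB]
        · -- bump at the bottom of `A`
          have hlA : 1 ≤ A.length := List.length_pos_iff.mpr hAnil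
          have hsome : bumpIdx m a C0 = some (A.length - 1) := by
            rw [hAB]
            apply bumpIdx_some.mpr
            refine ⟨by rw [List.length_append]; omega, ?_, ?_⟩
            · rw [List.getD_append _ _ _ _ (by omega)]
              have := hA _ (getD_mem (show A.length - 1 < A.length by omega))
              exact hits_of_lt (by omega)
            · intro s hs hs'
              rw [List.length_append] at hs'
              rw [List.getD_append_right _ _ _ _ (by omega)]
              exact hbnoneB _ (by omega)
          rw [insertAux_cons_some rest hsome]
          have hbval : C0.getD (A.length - 1) 0 < v := by
            rw [hAB, List.getD_append _ _ _ _ (by omega)]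
            exact hA _ (getD_mem (by omega))
          have hset : C0.set (A.length - 1) a = (A.take (A.length - 1) ++ [a]) ++ B := by
            rw [hAB, List.set_append, if_pos (by omega)]
            congr 1
            rw [List.set_eq_take_append_cons_drop, if_pos (by omega)]
            rw [show A.length - 1 + 1 = A.length from by omega, List.drop_length]
          have hvgeNew : vGE v (C0.set (A.length - 1) a) = a :: B := by
            rw [hset, vGE_append, vGE_append,
              vGE_eq_nil (fun x hx => hA x (List.take_subset _ _ hx)),
              vGE_eq_self (by intro x hx; simp at hx; subst hx; exact hva),
              vGE_eq_self hB]
            simp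
          rw [geSub_cons, if_neg (by simp [hvgeNew]), hvgeNew]
          have ihb := ih (C0.getD (A.length - 1) 0) hsrest hqrest
          rw [if_neg (by omega)] at ihb
          rw [ihb]
          by_cases hBnil : B = []
          · have h1 : geSub v (C0 :: rest) = [] :=
              geSub_nil_of_chain hch (by rw [hvge, hBnil])
            have h2 : geSub v rest = [] := by
              rw [geSub_cons, if_pos (by rw [hvge, hBnil])] at h1; exact h1
            rw [h1, h2, insertAux_nil, hBnil]
          · rw [geSub_cons, if_neg (by rw [hvge]; exact hBnil), hvge,
              insertAux_cons_none _ hbB]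
      · -- bump in the `≥ v` part
        obtain ⟨ht', h1', h2'⟩ := bumpIdx_some.mp hbB
        have hBnil : B ≠ [] := List.ne_nil_of_length_pos (by omega)
        have hsome : bumpIdx m a C0 = some (A.length + t') := by
          rw [hAB]
          apply bumpIdx_some.mpr
          refine ⟨by rw [List.length_append]; omega, ?_, ?_⟩
          · rw [List.getD_append_right _ _ _ _ (by omega),
              show A.length + t' - A.length = t' from by omega]
            exact h1'
          · intro s hs hs'
            rw [List.length_append] at hs'
            rw [List.getD_append_right _ _ _ _ (by omega)]
            exact h2' _ (by omega) (by omega)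
        rw [insertAux_cons_some rest hsome]
        have hval : C0.getD (A.length + t') 0 = B.getD t' 0 := by
          rw [hAB, List.getD_append_right _ _ _ _ (by omega),
            show A.length + t' - A.length = t' from by omega]
        have hvb : v ≤ B.getD t' 0 := hB _ (getD_mem ht')
        have hset : C0.set (A.length + t') a = A ++ B.set t' a := by
          rw [hAB, List.set_append, if_neg (by omega),
            show A.length + t' - A.length = t' from by omega]
        have hvgeNew : vGE v (C0.set (A.length + t') a) = B.set t' a := by
          rw [hset, vGE_append, vGE_eq_nil hA, List.nil_append]
          apply vGE_eq_self
          intro x hx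
          rcases List.mem_or_eq_of_mem_set hx with hx' | rfl
          · exact hB x hx'
          · exact hva
        have hBset_ne : B.set t' a ≠ [] :=
          List.ne_nil_of_length_pos (by rw [List.length_set]; omega)
        rw [geSub_cons, hvgeNew, if_neg hBset_ne, hval]
        have ihb := ih (B.getD t' 0) hsrest hqrest
        rw [if_pos hvb] at ihb
        rw [ihb]
        rw [geSub_cons, if_neg (by rw [hvge]; exact hBnil), hvge,
          insertAux_cons_some _ hbB]
    · -- a < v
      rw [if_neg hva]
      rcases hbC : bumpIdx m a C0 with _ | t
      · rw [insertAux_cons_none rest hbC]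
        rw [geSub_cons, vGE_cons_neg _ hva, geSub_cons]
      · rw [insertAux_cons_some rest hbC]
        obtain ⟨ht, h1, h2⟩ := bumpIdx_some.mp hbC
        have hbv : C0.getD t 0 < v := by
          have := hits_le h1; omega
        have hvgeNew : vGE v (C0.set t a) = vGE v C0 :=
          vGE_set_low ht hbv (by omega)
        have ihb := ih (C0.getD t 0) hsrest hqrest
        rw [if_neg (by omega)] at ihb
        rw [geSub_cons, hvgeNew, ihb, geSub_cons]

lemma getD_mem' {L : List (List ℕ)} {r : ℕ} (h : r < L.length) : L.getD r [] ∈ L := by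
  rw [List.getD_eq_getElem _ _ h]; exact List.getElem_mem h

lemma map_set_cons {f : List ℕ → List ℕ} {k : ℕ} (hf : ∀ y, f (k :: y) = f y) :
    ∀ (L : List (List ℕ)) (r : ℕ), (L.set r (k :: L.getD r [])).map f = L.map f := by
  intro L
  induction L with
  | nil => intro r; rfl
  | cons C rest ih =>
    intro r
    cases r with
    | zero => simp [hf]
    | succ r => simp only [List.getD_cons_succ, List.set_cons_succ, List.map_cons, ih r]

/-- For a small top letter, Burge insertion has the same `geSub v` as plain insertion. -/
lemma geSub_burge {m v : ℕ} (T : List (List ℕ)) (p : ℕ × ℕ) (hk : p.1 < v) :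
    geSub v (burgeIns m T p) = geSub v (insertAux m p.2 T).1 := by
  rw [burgeIns, geSub_eq, geSub_eq]
  congr 1
  exact map_set_cons (fun y => vGE_cons_neg y (by omega)) _ _

lemma chainQ_set_cons {v k : ℕ} (hk : k < v) :
    ∀ (L : List (List ℕ)) (r : ℕ), List.Chain' (Qrel v) L →
      List.Chain' (Qrel v) (L.set r (k :: L.getD r [])) := by
  intro L
  induction L with
  | nil => intro r _; simp; exact List.isChain_nil
  | cons C rest ih =>
    intro r h
    replace h := List.isChain_cons.mp h
    cases r with
    | zero =>
      rw [List.getD_cons_zero, List.set_cons_zero]; refine List.isChain_cons.mpr ?_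
      refine ⟨fun D hD hex => ?_, h.2⟩
      obtain ⟨x, hx, hvx⟩ := h.1 D hD hex
      exact ⟨x, List.mem_cons_of_mem _ hx, hvx⟩
    | succ r =>
      rw [List.getD_cons_succ, List.set_cons_succ]; refine List.isChain_cons.mpr ?_
      refine ⟨fun D hD hex => ?_, ih r h.2⟩
      rcases hrest : rest with _ | ⟨E, R'⟩
      · rw [hrest] at hD; simp at hD
      · rw [hrest] at hD
        cases r with
        | zero =>
          rw [List.getD_cons_zero, List.set_cons_zero, List.head?_cons] at hD
          simp only [Option.mem_def, Option.some.injEq] at hD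
          subst hD
          obtain ⟨x, hx, hvx⟩ := hex
          rcases List.mem_cons.mp hx with rfl | hx'
          · omega
          · exact h.1 E (by rw [hrest]; simp) ⟨x, hx', hvx⟩
        | succ r =>
          rw [List.set_cons_succ, List.head?_cons] at hD
          simp only [Option.mem_def, Option.some.injEq] at hD
          subst hD
          exact h.1 E (by rw [hrest]; simp) hex

lemma mem_of_mem_set {L : List (List ℕ)} {r : ℕ} {y C : List ℕ}
    (hC : C ∈ L.set r y) : C ∈ L ∨ C = y := List.mem_or_eq_of_mem_set hC

/-- Basic preservation for Burge insertion. -/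
lemma burge_basic {m : ℕ} {T : List (List ℕ)} {p : ℕ × ℕ}
    (hs : ∀ C ∈ T, C.Pairwise (· ≤ ·)) (hnil : ∀ C ∈ T, C ≠ [])
    (hkl : p.1 ≤ p.2) (hent : ∀ C ∈ T, ∀ x ∈ C, p.1 ≤ x) :
    (∀ C ∈ burgeIns m T p, C.Pairwise (· ≤ ·)) ∧
    (∀ C ∈ burgeIns m T p, C ≠ []) ∧
    (∀ C ∈ burgeIns m T p, ∀ x ∈ C, x = p.1 ∨ x = p.2 ∨ ∃ D ∈ T, x ∈ D) := by
  have hburge : burgeIns m T p = (insertAux m p.2 T).1.set (insertAux m p.2 T).2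
      (p.1 :: (insertAux m p.2 T).1.getD (insertAux m p.2 T).2 []) := rfl
  rw [hburge]
  set R := insertAux m p.2 T with hR
  have hmem : ∀ C ∈ R.1, ∀ x ∈ C, x = p.2 ∨ ∃ D ∈ T, x ∈ D := ins_mem m T p.2
  have hRs : ∀ C ∈ R.1, C.Pairwise (· ≤ ·) := ins_sorted m T p.2 hs
  have hRnil : ∀ C ∈ R.1, C ≠ [] := ins_ne_nil m T p.2 hnil
  have hgetD : ∀ x ∈ R.1.getD R.2 [], x = p.2 ∨ ∃ D ∈ T, x ∈ D := by
    intro x hx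
    by_cases h : R.2 < R.1.length
    · exact hmem _ (getD_mem' h) x hx
    · rw [List.getD_eq_default _ _ (by omega)] at hx; simp at hx
  refine ⟨?_, ?_, ?_⟩
  · intro C hC
    rcases mem_of_mem_set hC with hC' | rfl
    · exact hRs C hC'
    · rw [List.pairwise_cons]
      refine ⟨fun x hx => ?_, ?_⟩
      · rcases hgetD x hx with rfl | ⟨D, hD, hxD⟩
        · exact hkl
        · exact hent D hD x hxD
      · by_cases h : R.2 < R.1.length
        · exact hRs _ (getD_mem' h)
        · rw [List.getD_eq_default _ _ (by omega)]; simp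
  · intro C hC
    rcases mem_of_mem_set hC with hC' | rfl
    · exact hRnil C hC'
    · simp
  · intro C hC x hx
    rcases mem_of_mem_set hC with hC' | rfl
    · rcases hmem C hC' x hx with rfl | h
      · exact Or.inr (Or.inl rfl)
      · exact Or.inr (Or.inr h)
    · rcases List.mem_cons.mp hx with rfl | hx'
      · exact Or.inl rfl
      · rcases hgetD x hx' with rfl | h
        · exact Or.inr (Or.inl rfl)
        · exact Or.inr (Or.inr h)

/-- Burge insertion preserves the chain condition when the top letter is `< v`. -/
lemma burge_Q {m v : ℕ} {T : List (List ℕ)} {p : ℕ × ℕ}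
    (hq : List.Chain' (Qrel v) T) (hkv : p.1 < v) :
    List.Chain' (Qrel v) (burgeIns m T p) := by
  exact chainQ_set_cons hkv _ _ (ins_Q m v T p.2 hq).1

/-- Folding Burge insertions of a sorted biword over a tableau: basic invariants. -/
lemma fold_burge_base (m : ℕ) : ∀ (ps : List (ℕ × ℕ)) (T : List (List ℕ)),
    ps.Pairwise (fun p q => p.1 ≤ q.1) → (∀ p ∈ ps, p.1 ≤ p.2) →
    (∀ C ∈ T, C.Pairwise (· ≤ ·)) → (∀ C ∈ T, C ≠ []) →
    (∀ p ∈ ps, ∀ C ∈ T, ∀ x ∈ C, p.1 ≤ x) →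
    (∀ C ∈ ps.foldr (fun p S => burgeIns m S p) T, C.Pairwise (· ≤ ·)) ∧
    (∀ C ∈ ps.foldr (fun p S => burgeIns m S p) T, C ≠ []) ∧
    (∀ C ∈ ps.foldr (fun p S => burgeIns m S p) T, ∀ x ∈ C,
      (∃ p ∈ ps, x = p.1 ∨ x = p.2) ∨ ∃ D ∈ T, x ∈ D) := by
  intro ps
  induction ps with
  | nil =>
    intro T _ _ h1 h2 _
    exact ⟨h1, h2, fun C hC x hx => Or.inr ⟨C, hC, hx⟩⟩
  | cons p ps ih =>
    intro T hpw hle hs hnil hent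
    rw [List.pairwise_cons] at hpw
    obtain ⟨ihs, ihnil, ihmem⟩ := ih T hpw.2 (fun q hq => hle q (by simp [hq]))
      hs hnil (fun q hq => hent q (by simp [hq]))
    set T1 := ps.foldr (fun p S => burgeIns m S p) T with hT1
    have hent1 : ∀ C ∈ T1, ∀ x ∈ C, p.1 ≤ x := by
      intro C hC x hx
      rcases ihmem C hC x hx with ⟨q, hq, hxq⟩ | ⟨D, hD, hxD⟩
      · have h1 := hpw.1 q hq
        have h2 := hle q (by simp [hq])
        rcases hxq with rfl | rfl <;> omega
      · exact hent p (by simp) D hD x hxD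
    obtain ⟨b1, b2, b3⟩ := burge_basic ihs ihnil (hle p (by simp)) hent1
    refine ⟨by simpa using b1, by simpa using b2, ?_⟩
    intro C hC x hx
    rcases b3 C (by simpa using hC) x hx with rfl | rfl | ⟨D, hD, hxD⟩
    · exact Or.inl ⟨p, by simp, Or.inl rfl⟩
    · exact Or.inl ⟨p, by simp, Or.inr rfl⟩
    · rcases ihmem D hD x hxD with ⟨q, hq, hxq⟩ | h
      · exact Or.inl ⟨q, by simp [hq], hxq⟩
      · exact Or.inr h

/-- Folding Burge insertions of low biletters: `geSub v` and invariants. -/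
lemma fold_burge_lo (m v : ℕ) : ∀ (ps : List (ℕ × ℕ)) (T : List (List ℕ)),
    ps.Pairwise (fun p q => p.1 ≤ q.1) → (∀ p ∈ ps, p.1 ≤ p.2 ∧ p.1 < v) →
    (∀ C ∈ T, C.Pairwise (· ≤ ·)) → (∀ C ∈ T, C ≠ []) →
    List.Chain' (Qrel v) T →
    (∀ p ∈ ps, ∀ C ∈ T, ∀ x ∈ C, p.1 ≤ x) →
    List.Chain' (Qrel v) (ps.foldr (fun p S => burgeIns m S p) T) ∧
    geSub v (ps.foldr (fun p S => burgeIns m S p) T) =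
      (ps.filter (fun p => decide (v ≤ p.2))).foldr
        (fun p S => colIns m S p.2) (geSub v T) := by
  intro ps
  induction ps with
  | nil => intro T _ _ _ _ hq _; exact ⟨hq, rfl⟩
  | cons p ps ih =>
    intro T hpw hle hs hnil hq hent
    rw [List.pairwise_cons] at hpw
    obtain ⟨ihq, ihgs⟩ := ih T hpw.2 (fun q hq => hle q (by simp [hq])) hs hnil hq
      (fun q hq => hent q (by simp [hq]))
    obtain ⟨ihs, ihnil, ihmem⟩ := fold_burge_base m ps T hpw.2
      (fun q hq => (hle q (by simp [hq])).1) hs hnil (fun q hq => hent q (by simp [hq]))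
    set T1 := ps.foldr (fun p S => burgeIns m S p) T with hT1
    have hp := hle p (by simp)
    constructor
    · exact burge_Q ihq hp.2
    · rw [List.foldr_cons]
      rw [geSub_burge T1 p hp.2]
      rw [ins_geSub m v T1 p.2 ihs ihq, ihgs]
      rw [List.filter_cons]
      by_cases hvp2 : v ≤ p.2
      · rw [if_pos hvp2, if_pos (show decide (v ≤ p.2) = true by simpa using hvp2),
          List.foldr_cons]
        rfl
      · rw [if_neg hvp2, if_neg (show ¬ decide (v ≤ p.2) = true by simpa using hvp2)]

lemma geSub_eq_self {v : ℕ} {T : List (List ℕ)} (h1 : ∀ C ∈ T, C ≠ [])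
    (h2 : ∀ C ∈ T, ∀ x ∈ C, v ≤ x) : geSub v T = T := by
  rw [geSub_eq]
  have : T.map (vGE v) = T := by
    apply List.map_congr_left ?_ |>.trans (List.map_id T)
    intro C hC
    exact vGE_eq_self (h2 C hC)
  rw [this]
  rw [List.filter_eq_self]
  intro C hC
  simpa using h1 C hC


/-- The row block of `biletters` for first letter `i`. -/
def rowB (m n : ℕ) (i : ℕ) : List (ℕ × ℕ) :=
  if i ≤ m then ((List.range' i (m + n + 1 - i)).map fun j => (i, j)).reverse
  else (List.range' i (m + n + 1 - i)).map fun j => (i, j)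

lemma biletters_eq (m n : ℕ) :
    biletters m n = ((List.range' 1 (m + n)).map (rowB m n)).flatten := rfl

lemma biword_eq (m n : ℕ) (c : ℕ × ℕ → ℕ) :
    biword m n c = (((List.range' 1 (m + n)).map (rowB m n)).flatten.map
      fun p => List.replicate (c p) p).flatten := rfl

lemma mem_rowB {m n i : ℕ} {p : ℕ × ℕ} (hp : p ∈ rowB m n i) :
    p.1 = i ∧ i ≤ p.2 ∧ p.2 ≤ m + n := by
  unfold rowB at hp
  split at hp
  · rw [List.mem_reverse, List.mem_map] at hp
    obtain ⟨j, hj, rfl⟩ := hp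
    rw [List.mem_range'] at hj
    obtain ⟨k, hk, rfl⟩ := hj
    refine ⟨rfl, by omega, by simp; omega⟩
  · rw [List.mem_map] at hp
    obtain ⟨j, hj, rfl⟩ := hp
    rw [List.mem_range'] at hj
    obtain ⟨k, hk, rfl⟩ := hj
    refine ⟨rfl, by omega, by simp; omega⟩

lemma mem_biword {m n : ℕ} {c : ℕ × ℕ → ℕ} {p : ℕ × ℕ} (hp : p ∈ biword m n c) :
    c p ≠ 0 ∧ 1 ≤ p.1 ∧ p.1 ≤ p.2 ∧ p.2 ≤ m + n := by
  rw [biword_eq, List.mem_flatten] at hp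
  obtain ⟨l, hl, hpl⟩ := hp
  rw [List.mem_map] at hl
  obtain ⟨q, hq, rfl⟩ := hl
  obtain ⟨hc, rfl⟩ := List.mem_replicate.mp hpl
  rw [List.mem_flatten] at hq
  obtain ⟨l', hl', hql'⟩ := hq
  rw [List.mem_map] at hl'
  obtain ⟨i, hi, rfl⟩ := hl'
  rw [List.mem_range'] at hi
  obtain ⟨k, hk, rfl⟩ := hi
  obtain ⟨h1, h2, h3⟩ := mem_rowB hql'
  exact ⟨hc, by omega, by omega, h3⟩

lemma biletters_pairwise (m n : ℕ) :
    (biletters m n).Pairwise (fun p q => p.1 ≤ q.1) := by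
  rw [biletters_eq, List.pairwise_flatten]
  constructor
  · intro l hl
    rw [List.mem_map] at hl
    obtain ⟨i, _, rfl⟩ := hl
    apply List.pairwise_of_forall_mem_list
    intro p hp q hq
    rw [(mem_rowB hp).1, (mem_rowB hq).1]
  · rw [List.pairwise_map]
    refine (List.pairwise_lt_range' (s := 1) (n := m + n)).imp ?_
    intro i1 i2 hlt p hp q hq
    rw [(mem_rowB hp).1, (mem_rowB hq).1]
    omega

lemma biword_pairwise (m n : ℕ) (c : ℕ × ℕ → ℕ) :
    (biword m n c).Pairwise (fun p q => p.1 ≤ q.1) := by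
  rw [biword_eq]
  have : ((List.range' 1 (m + n)).map (rowB m n)).flatten = biletters m n :=
    (biletters_eq m n).symm
  rw [this, List.pairwise_flatten]
  constructor
  · intro l hl
    rw [List.mem_map] at hl
    obtain ⟨q, _, rfl⟩ := hl
    rw [List.pairwise_replicate]
    exact Or.inr le_rfl
  · rw [List.pairwise_map]
    refine (biletters_pairwise m n).imp ?_
    intro p q h x hx y hy
    rw [(List.mem_replicate.mp hx).2, (List.mem_replicate.mp hy).2]
    exact h

/-- Splitting the biword at first letter `k`. -/
lemma biword_split (m n : ℕ) (c : ℕ × ℕ → ℕ) (k : ℕ) (hk : k ≤ m + n) :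
    biword m n c =
      (((List.range' 1 k).map (rowB m n)).flatten.map
        fun p => List.replicate (c p) p).flatten ++
      (((List.range' (k + 1) (m + n - k)).map (rowB m n)).flatten.map
        fun p => List.replicate (c p) p).flatten := by
  have hr : List.range' 1 (m + n) = List.range' 1 k ++ List.range' (k + 1) (m + n - k) := by
    have h := List.range'_append (s := 1) (m := k) (n := m + n - k) (step := 1)
    rw [show 1 + 1 * k = k + 1 from by omega, show k + (m + n - k) = m + n from by omega] at h
    exact h.symm
  rw [biword_eq, hr, List.map_append, List.flatten_append, List.map_append,
    List.flatten_append]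


lemma mem_blocks {m n s k : ℕ} {q : ℕ × ℕ}
    (h : q ∈ ((List.range' s k).map (rowB m n)).flatten) :
    s ≤ q.1 ∧ q.1 < s + k ∧ q.1 ≤ q.2 ∧ q.2 ≤ m + n := by
  rw [List.mem_flatten] at h
  obtain ⟨l, hl, hql⟩ := h
  rw [List.mem_map] at hl
  obtain ⟨i', hi', rfl⟩ := hl
  rw [List.mem_range'] at hi'
  obtain ⟨k', hk', rfl⟩ := hi'
  obtain ⟨h1, h2, h3⟩ := mem_rowB hql
  refine ⟨by omega, by omega, by omega, h3⟩



end Statement5Aux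

/-- For every `i ∈ {1, …, m+n−1}` with `i ≠ m` and every `c ∈ M_{▵_i}`, the tableau
`𝙿_i(c)` equals the subtableau of `κ(c)` consisting of all boxes whose entries are
greater than or equal to `i+2`. -/
theorem statement5 (m n : ℕ) (hm : 2 ≤ m) (hn : 1 ≤ n) (i : ℕ) (hi1 : 1 ≤ i)
    (hi2 : i ≤ m + n - 1) (him : i ≠ m) (c : ℕ × ℕ → ℕ) (hc : Md m n c)
    (hsupp : ∀ p : ℕ × ℕ, c p ≠ 0 → i ≤ p.1) :
    PtabI m n i c = geSub (i + 2) (kappa m n c) := by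

  have hmn3 : 3 ≤ m + n := by omega
  have hik : i + 1 ≤ m + n := by omega
  set v := i + 2 with hv
  set chi := cRes (BTset m n (i + 2)) c with hchi
  set cdia := cRes (DiaSet m n i) c with hcdia
  -- the lo and hi parts
  set loflat := ((List.range' 1 (i + 1)).map (rowB m n)).flatten with hloflat
  set hiflat := ((List.range' (i + 1 + 1) (m + n - (i + 1))).map (rowB m n)).flatten with hhiflat
  set Wlo := (loflat.map fun p => List.replicate (c p) p).flatten with hWlo
  set Whi := (hiflat.map fun p => List.replicate (c p) p).flatten with hWhi
  -- Step 1: split the biword of c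
  have hsplit : biword m n c = Wlo ++ Whi := biword_split m n c (i + 1) hik
  -- facts about membership
  have hmemlo : ∀ q ∈ loflat, 1 ≤ q.1 ∧ q.1 ≤ i + 1 ∧ q.1 ≤ q.2 ∧ q.2 ≤ m + n := by
    intro q hq
    have := mem_blocks (hloflat ▸ hq)
    omega
  have hmemhi : ∀ q ∈ hiflat, i + 2 ≤ q.1 ∧ q.1 ≤ q.2 ∧ q.2 ≤ m + n := by
    intro q hq
    have := mem_blocks (hhiflat ▸ hq)
    omega
  -- Step 2: biword of chi is Whi
  have hchi_lo : ∀ q ∈ loflat, chi q = 0 := by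
    intro q hq
    have hb := hmemlo q hq
    rw [hchi]
    unfold cRes
    rw [if_neg]
    intro hBT
    rw [BTset] at hBT
    omega
  have hchi_hi : ∀ q ∈ hiflat, chi q = c q := by
    intro q hq
    have hb := hmemhi q hq
    rw [hchi]
    unfold cRes
    rw [if_pos]
    rw [BTset]
    omega
  have hbiwchi : biword m n chi = Whi := by
    rw [biword_split m n chi (i + 1) hik]
    have h1 : ((loflat.map fun p => List.replicate (chi p) p)).flatten = [] := by
      rw [List.flatten_eq_nil_iff]
      intro l hl
      rw [List.mem_map] at hl
      obtain ⟨q, hq, rfl⟩ := hl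
      rw [hchi_lo q hq]
      rfl
    have h2 : (loflat.map fun p => List.replicate (chi p) p).flatten ++
        (hiflat.map fun p => List.replicate (chi p) p).flatten = Whi := by
      rw [h1, List.nil_append, hWhi]
      congr 1
      exact List.map_congr_left fun q hq => by rw [hchi_hi q hq]
    exact h2
  -- Step 3: facts about K = kappa m n chi
  set K := kappa m n chi with hK
  have hKbase := fold_burge_base m (biword m n chi) []
    (biword_pairwise m n chi) (fun p hp => (mem_biword hp).2.2.1)
    (by simp) (by simp) (by simp)
  rw [← kappa] at hKbase
  obtain ⟨hKs, hKnil, hKmem⟩ := hKbase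
  have hKent : ∀ C ∈ K, ∀ x ∈ C, v ≤ x := by
    intro C hC x hx
    rcases hKmem C hC x hx with ⟨p, hp, hxp⟩ | ⟨D, hD, -⟩
    · obtain ⟨hcne, h1, h2, h3⟩ := mem_biword hp
      have hBT : BTset m n (i + 2) p := by
        by_contra hBT
        rw [hchi] at hcne
        unfold cRes at hcne
        rw [if_neg hBT] at hcne
        exact hcne rfl
      rw [BTset] at hBT
      rcases hxp with rfl | rfl <;> omega
    · simp at hD
  have hKq : List.Chain' (Qrel v) K := by
    apply chainQ_of_all
    intro C hC
    obtain ⟨x, hx⟩ := List.exists_mem_of_ne_nil C (hKnil C hC)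
    exact ⟨x, hx, hKent C hC x hx⟩
  have hKge : geSub v K = K := geSub_eq_self hKnil hKent
  -- Step 4: geSub of kappa c
  have hkap : kappa m n c = Wlo.foldr (fun p S => burgeIns m S p) K := by
    rw [kappa, hsplit, List.foldr_append, hK, ← hbiwchi, kappa]
  have hWlo_pw : Wlo.Pairwise (fun p q => p.1 ≤ q.1) := by
    have := biword_pairwise m n c
    rw [hsplit] at this
    exact (List.pairwise_append.mp this).1
  have hWlo_mem : ∀ p ∈ Wlo, 1 ≤ p.1 ∧ p.1 ≤ i + 1 ∧ p.1 ≤ p.2 ∧ p.2 ≤ m + n ∧ c p ≠ 0 := by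
    intro p hp
    rw [hWlo, List.mem_flatten] at hp
    obtain ⟨l, hl, hpl⟩ := hp
    rw [List.mem_map] at hl
    obtain ⟨q, hq, hlq⟩ := hl
    rw [← hlq] at hpl
    obtain ⟨hcne, hpq⟩ := List.mem_replicate.mp hpl
    have hb := hmemlo q hq
    rw [hpq]
    exact ⟨by omega, by omega, by omega, by omega, hcne⟩
  have hfold := fold_burge_lo m v Wlo K hWlo_pw
    (fun p hp => ⟨(hWlo_mem p hp).2.2.1, by have := (hWlo_mem p hp).2.1; omega⟩)
    hKs hKnil hKq
    (fun p hp C hC x hx => by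
      have h1 := (hWlo_mem p hp).2.1
      have h2 := hKent C hC x hx
      omega)
  obtain ⟨-, hgeq⟩ := hfold
  rw [hKge] at hgeq
  -- Step 5: the filtered lo word is the biword of cdia
  have hfilt : Wlo.filter (fun p => decide (v ≤ p.2)) = biword m n cdia := by
    rw [biword_split m n cdia (i + 1) hik]
    have hdia_hi : ∀ q ∈ hiflat, cdia q = 0 := by
      intro q hq
      have hb := hmemhi q hq
      rw [hcdia]
      unfold cRes
      rw [if_neg]
      rintro ⟨-, -, hBT⟩
      rw [BTset] at hBT
      exact hBT ⟨by omega, by omega, by omega⟩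
    have h2 : ((hiflat.map fun p => List.replicate (cdia p) p)).flatten = [] := by
      rw [List.flatten_eq_nil_iff]
      intro l hl
      rw [List.mem_map] at hl
      obtain ⟨q, hq, rfl⟩ := hl
      rw [hdia_hi q hq]
      rfl
    rw [h2, List.append_nil]
    rw [hWlo, List.filter_flatten, List.map_map]
    congr 1
    apply List.map_congr_left
    intro q hq
    have hb := hmemlo q hq
    simp only [Function.comp_apply, List.filter_replicate]
    by_cases hq2 : v ≤ q.2
    · rw [if_pos (by simpa using hq2)]
      by_cases hqi : q.1 < i
      · have hc0 : c q = 0 := by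
          by_contra hne
          have := hsupp q hne
          omega
        have hd0 : cdia q = 0 := by
          rw [hcdia]; unfold cRes
          split <;> simp [hc0]
        rw [hc0, hd0]
      · have hdia : DiaSet m n i q := by
          refine ⟨⟨by omega, by omega, by omega⟩, ?_, ?_⟩
          · rw [TriSet]
            rcases Nat.lt_or_ge i m with him' | him'
            · rw [if_pos him']
              intro heq
              rw [heq] at hq2
              simp at hq2
              omega
            · rw [if_neg (by omega), if_neg (by omega)]
              rintro (heq | heq | heq) <;> (rw [heq] at hq2; simp at hq2; omega)
          · rintro ⟨hBT, -, -⟩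
            omega
        have : cdia q = c q := by
          rw [hcdia]; unfold cRes; rw [if_pos hdia]
        rw [this]
    · rw [if_neg (by simpa using hq2)]
      have hd0 : cdia q = 0 := by
        by_cases hqi : q.1 < i
        · have hc0 : c q = 0 := by
            by_contra hne
            have := hsupp q hne
            omega
          rw [hcdia]; unfold cRes
          split <;> simp [hc0]
        · -- q.1 ∈ {i, i+1}, q.1 ≤ q.2 ≤ i+1
          have hq1 : q.1 = i ∨ q.1 = i + 1 := by omega
          have hq2' : q.2 ≤ i + 1 := by omega
          rcases Nat.lt_or_ge i m with him' | him'
          · -- i < m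
            by_cases hqeq : q.1 = i ∧ q.2 = i + 1
            · -- q = (i, i+1) is in TriSet
              rw [hcdia]; unfold cRes
              rw [if_neg]
              rintro ⟨-, hTri, -⟩
              exact hTri (by rw [TriSet, if_pos him']; exact Prod.ext_iff.mpr ⟨hqeq.1, hqeq.2⟩)
            · -- q = (i,i) or (i+1,i+1): c q = 0 by Md
              have hc0 : c q = 0 := by
                have : q.1 = q.2 := by omega
                have h := hc.2.2 q.1 (by omega)
                have hq' : q = (q.1, q.1) := Prod.ext_iff.mpr ⟨rfl, this.symm⟩
                rw [hq'] at *
                exact h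
              rw [hcdia]; unfold cRes
              split <;> simp [hc0]
          · -- m < i: all three possibilities are in TriSet
            have him'' : m < i := by omega
            rw [hcdia]; unfold cRes
            rw [if_neg]
            rintro ⟨-, hTri, -⟩
            apply hTri
            rw [TriSet, if_neg (by omega), if_neg (by omega)]
            have hcases : (q.1 = i ∧ q.2 = i) ∨ (q.1 = i ∧ q.2 = i + 1) ∨
                (q.1 = i + 1 ∧ q.2 = i + 1) := by omega
            rcases hcases with ⟨h1, h2⟩ | ⟨h1, h2⟩ | ⟨h1, h2⟩
            · exact Or.inl (Prod.ext_iff.mpr ⟨h1, h2⟩)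
            · exact Or.inr (Or.inl (Prod.ext_iff.mpr ⟨h1, h2⟩))
            · exact Or.inr (Or.inr (Prod.ext_iff.mpr ⟨h1, h2⟩))
      rw [hd0]
      rfl
  -- Step 6: conclude
  have hfinal : PtabI m n i c = (biword m n cdia).foldr (fun p S => colIns m S p.2) K := rfl
  rw [hfinal, ← hfilt, ← hgeq, ← hkap]
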